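/- Let σ > 0. For x ≥ 0 and z ∈ ℝ, let x̃(z) = (√x + z)² − σ² (the unbiased estimate of x), let v(x) = 2σ²(2x + σ²) (its true variance), and let ṽ(z) = 2σ²(2·x̃(z) + σ²) (the plug-in variance estimate). Then ṽ/v converges to 1 in probability as x → ∞: for every ε > 0, the probability under N(0,σ²) of { z : |ṽ(z)/v(x) − 1| > ε } tends to 0 as x → ∞. -/

import Mathlib

open ProbabilityTheory MeasureTheory Filter Set

lemma sqrt_tendsto_atTop' : Tendsto Real.sqrt atTop atTop :=
  tendsto_atTop_atTop_of_monotone (fun _ _ h => Real.sqrt_le_sqrt h)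
    (fun b => ⟨b ^ 2, by rw [Real.sqrt_sq_eq_abs]; exact le_abs_self b⟩)

lemma tail_tendsto (μ : Measure ℝ) [IsProbabilityMeasure μ] :
    Tendsto (fun r : ℝ => μ {z : ℝ | r < |z|}) atTop (nhds 0) := by
  have h := tendsto_measure_iInter_atTop (μ := μ) (s := fun r : ℝ => {z : ℝ | r < |z|})
    (fun r => (measurableSet_lt measurable_const measurable_abs).nullMeasurableSet)
    (fun i j hij => fun z hz => lt_of_le_of_lt hij hz)
    ⟨0, measure_ne_top μ _⟩
  have hempty : (⋂ r : ℝ, {z : ℝ | r < |z|}) = ∅ := by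
    ext z
    simp only [Set.mem_iInter, Set.mem_setOf_eq, Set.mem_empty_iff_false, iff_false, not_forall,
      not_lt]
    exact ⟨|z|, le_rfl⟩
  rw [hempty] at h
  simpa [Function.comp_def] using h

theorem sqrt_noisysum_variance_ratio_tendsto (σ : ℝ) (hσ : 0 < σ) (ε : ℝ) (hε : 0 < ε) :
    Tendsto
      (fun x : ℝ =>
        (gaussianReal 0 ⟨σ ^ 2, sq_nonneg σ⟩)
          {z : ℝ |
            ε < |(2 * σ ^ 2 * (2 * ((Real.sqrt x + z) ^ 2 - σ ^ 2) + σ ^ 2)) /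
                  (2 * σ ^ 2 * (2 * x + σ ^ 2)) - 1|})
      atTop (nhds 0) := by
  set μ := gaussianReal 0 ⟨σ ^ 2, sq_nonneg σ⟩
  have hσ2 : (0 : ℝ) < σ ^ 2 := by positivity
  have hupper : Tendsto (fun x : ℝ => μ {z : ℝ | Real.sqrt (Real.sqrt x) < |z|}) atTop (nhds 0) :=
    (@tail_tendsto μ (by unfold μ; exact instIsProbabilityMeasureGaussianReal _ _)).comp (sqrt_tendsto_atTop'.comp sqrt_tendsto_atTop')
  have hincl : ∀ᶠ x : ℝ in atTop,
      {z : ℝ |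
        ε < |(2 * σ ^ 2 * (2 * ((Real.sqrt x + z) ^ 2 - σ ^ 2) + σ ^ 2)) /
              (2 * σ ^ 2 * (2 * x + σ ^ 2)) - 1|} ⊆
        {z : ℝ | Real.sqrt (Real.sqrt x) < |z|} := by
    have h1 : ∀ᶠ x : ℝ in atTop, 6 / ε ≤ Real.sqrt (Real.sqrt x) :=
      (sqrt_tendsto_atTop'.comp sqrt_tendsto_atTop').eventually_ge_atTop _
    have h2 : ∀ᶠ x : ℝ in atTop, 4 / ε ≤ Real.sqrt x :=
      sqrt_tendsto_atTop'.eventually_ge_atTop _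
    have h3 : ∀ᶠ x : ℝ in atTop, 4 * σ ^ 2 / ε ≤ x := eventually_ge_atTop _
    have h4 : ∀ᶠ x : ℝ in atTop, (1 : ℝ) ≤ x := eventually_ge_atTop _
    filter_upwards [h1, h2, h3, h4] with x h1 h2 h3 h4
    intro z hz
    simp only [Set.mem_setOf_eq] at hz ⊢
    by_contra hcon
    push_neg at hcon
    have hx0 : (0 : ℝ) ≤ x := le_trans zero_le_one h4
    have hs : Real.sqrt x ^ 2 = x := Real.sq_sqrt hx0
    have ht : Real.sqrt (Real.sqrt x) ^ 2 = Real.sqrt x := Real.sq_sqrt (Real.sqrt_nonneg x)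
    have ht0 : (0 : ℝ) ≤ Real.sqrt (Real.sqrt x) := Real.sqrt_nonneg _
    have hs0 : (0 : ℝ) ≤ Real.sqrt x := Real.sqrt_nonneg x
    have hden : (0 : ℝ) < 2 * x + σ ^ 2 := by nlinarith
    have hkey : (2 * σ ^ 2 * (2 * ((Real.sqrt x + z) ^ 2 - σ ^ 2) + σ ^ 2)) /
          (2 * σ ^ 2 * (2 * x + σ ^ 2)) - 1
        = (4 * Real.sqrt x * z + 2 * z ^ 2 - 2 * σ ^ 2) / (2 * x + σ ^ 2) := by
      rw [div_sub_one (by positivity), div_eq_div_iff (by positivity) (by positivity)]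
      linear_combination (4 * σ ^ 2 * (2 * x + σ ^ 2)) * hs
    rw [hkey, abs_div, abs_of_pos hden] at hz
    have habs : |4 * Real.sqrt x * z + 2 * z ^ 2 - 2 * σ ^ 2|
        ≤ 4 * Real.sqrt x * |z| + 2 * z ^ 2 + 2 * σ ^ 2 := by
      have h5 := neg_abs_le z
      have h6 := le_abs_self z
      rw [abs_le]
      constructor <;> nlinarith
    have h6ε : 6 ≤ ε * Real.sqrt (Real.sqrt x) := by
      rw [div_le_iff₀ hε] at h1; linarith
    have h4ε : 4 ≤ ε * Real.sqrt x := by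
      rw [div_le_iff₀ hε] at h2; linarith
    have hz2 : z ^ 2 ≤ Real.sqrt x := by
      have h7 := sq_abs z
      nlinarith [abs_nonneg z]
    have hx4 : Real.sqrt (Real.sqrt x) ^ 4 = x := by
      have : Real.sqrt (Real.sqrt x) ^ 4 = (Real.sqrt (Real.sqrt x) ^ 2) ^ 2 := by ring
      rw [this, ht, hs]
    have hA : 4 * Real.sqrt x * |z| ≤ ε * x := by
      calc 4 * Real.sqrt x * |z| ≤ 4 * Real.sqrt x * Real.sqrt (Real.sqrt x) :=
            mul_le_mul_of_nonneg_left hcon (by positivity)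
        _ = 4 * Real.sqrt (Real.sqrt x) ^ 3 := by
            linear_combination (-4 * Real.sqrt (Real.sqrt x)) * ht
        _ ≤ ε * Real.sqrt (Real.sqrt x) * Real.sqrt (Real.sqrt x) ^ 3 := by
            nlinarith [pow_nonneg ht0 3]
        _ = ε * Real.sqrt (Real.sqrt x) ^ 4 := by ring
        _ = ε * x := by rw [hx4]
    have h8 : 4 * Real.sqrt x ≤ ε * x := by
      calc 4 * Real.sqrt x ≤ ε * Real.sqrt x * Real.sqrt x :=
            mul_le_mul_of_nonneg_right h4ε hs0
        _ = ε * Real.sqrt x ^ 2 := by ring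
        _ = ε * x := by rw [hs]
    have hB : 2 * z ^ 2 ≤ ε / 2 * x := by linarith
    have hD : 2 * σ ^ 2 ≤ ε / 2 * x := by
      rw [div_le_iff₀ hε] at h3
      linarith
    have hfinal : |4 * Real.sqrt x * z + 2 * z ^ 2 - 2 * σ ^ 2| ≤ ε * (2 * x + σ ^ 2) := by
      have hexp : ε * (2 * x + σ ^ 2) = 2 * (ε * x) + ε * σ ^ 2 := by ring
      have hεσ : 0 ≤ ε * σ ^ 2 := by positivity
      linarith only [habs, hA, hB, hD, hexp, hεσ]
    have : |4 * Real.sqrt x * z + 2 * z ^ 2 - 2 * σ ^ 2| / (2 * x + σ ^ 2) ≤ ε := by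
      rw [div_le_iff₀ hden]
      linarith
    linarith
  refine tendsto_of_tendsto_of_tendsto_of_le_of_le' tendsto_const_nhds hupper
    (Eventually.of_forall fun x => zero_le) ?_
  filter_upwards [hincl] with x hx
  exact measure_mono hx
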